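/- For any real p ≥ 2 and any integer ℓ ≥ 1, the product over j from 1 to ℓ of 1/(1 - p^(-j)) is strictly less than 1 + 6/p. -/

import Mathlib

open Finset

private lemma weier (s : Finset ℕ) (f : ℕ → ℝ) (h0 : ∀ i ∈ s, 0 ≤ f i)
    (h1 : ∀ i ∈ s, f i ≤ 1) :
    1 - ∑ i ∈ s, f i ≤ ∏ i ∈ s, (1 - f i) := by
  induction s using Finset.induction with
  | empty => simp
  | @insert a s ha ih =>
    rw [Finset.prod_insert ha, Finset.sum_insert ha]
    have ihh := ih (fun i hi => h0 i (mem_insert_of_mem hi))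
      (fun i hi => h1 i (mem_insert_of_mem hi))
    have hf0 : 0 ≤ f a := h0 a (mem_insert_self a s)
    have hf1 : f a ≤ 1 := h1 a (mem_insert_self a s)
    have hsum0 : 0 ≤ ∑ i ∈ s, f i :=
      Finset.sum_nonneg (fun i hi => h0 i (mem_insert_of_mem hi))
    nlinarith [ihh, hf0, hf1, hsum0]

private lemma key (x : ℝ) (hx0 : 0 < x) (hx2 : x ≤ 1/2) (ℓ : ℕ) (hℓ : 1 ≤ ℓ) :
    ∏ j ∈ Finset.Icc 1 ℓ, (1 - x ^ j)⁻¹ < 1 + 6 * x := by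
  have hx1 : x < 1 := by linarith
  have hpow : ∀ j : ℕ, 1 ≤ j → x ^ j ≤ x := by
    intro j hj
    calc x ^ j ≤ x ^ 1 := pow_le_pow_of_le_one hx0.le hx1.le hj
    _ = x := pow_one x
  have hpos : ∀ j ∈ Finset.Icc 1 ℓ, (0:ℝ) < 1 - x ^ j := by
    intro j hj
    have := hpow j (mem_Icc.mp hj).1
    linarith
  rw [Finset.prod_inv_distrib]
  have hhalf : (0:ℝ) ≤ 1/2 - x := by linarith
  have htp : (0:ℝ) < 1 - x - x^3 := by
    nlinarith [mul_nonneg hhalf (sq_nonneg x), mul_nonneg hhalf hx0.le]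
  have hx2pos : (0:ℝ) < 1 - x ^ 2 := by nlinarith [mul_nonneg hhalf hx0.le]
  have hPpos : 0 < ∏ j ∈ Finset.Icc 1 ℓ, (1 - x ^ j) := Finset.prod_pos hpos
  -- suffices to bound the product below
  have hQ : (1 - x^2) * (1 - x - x^3) < ∏ j ∈ Finset.Icc 1 ℓ, (1 - x ^ j) := by
    rcases lt_or_ge ℓ 3 with h3 | h3
    · interval_cases ℓ
      · simp [show Finset.Icc 1 1 = {1} from rfl]
        nlinarith [mul_pos (pow_pos hx0 2) htp, pow_pos hx0 3]
      · rw [show Finset.Icc 1 2 = {1, 2} from rfl, Finset.prod_insert (by decide),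
          Finset.prod_singleton]
        nlinarith [mul_pos hx2pos (pow_pos hx0 3)]
    · -- split the product
      have hsplit : (∏ j ∈ Finset.Ioc 0 2, (1 - x ^ j)) * ∏ j ∈ Finset.Ioc 2 ℓ, (1 - x ^ j)
          = ∏ j ∈ Finset.Ioc 0 ℓ, (1 - x ^ j) :=
        Finset.prod_Ioc_consecutive _ (by norm_num) (by omega)
      rw [show Finset.Icc 1 ℓ = Finset.Ioc 0 ℓ from Finset.Icc_add_one_left_eq_Ioc 0 ℓ, ← hsplit,
        show Finset.Ioc 0 2 = {1, 2} from rfl, Finset.prod_insert (by decide),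
        Finset.prod_singleton]
      -- bound the tail product
      set S : ℝ := ∑ j ∈ Finset.Ioc 2 ℓ, x ^ j with hS
      have htail : 1 - S ≤ ∏ j ∈ Finset.Ioc 2 ℓ, (1 - x ^ j) := by
        apply weier
        · intro i _; positivity
        · intro i hi
          have h1i : 1 ≤ i := by have := (mem_Ioc.mp hi).1; omega
          have := hpow i h1i
          linarith
      -- geometric bound : (1 - x) * S < x ^ 3, in fact S*(1-x) = x^3 - x^(ℓ+1)
      have hgeom : (1 - x) * S < x ^ 3 := by
        have : S = ∑ j ∈ Finset.Ico 3 (ℓ+1), x ^ j := by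
          rw [hS]; congr 1
        rw [this, Finset.sum_Ico_eq_sum_range]
        have hrw : ∀ i : ℕ, x ^ (3 + i) = x ^ 3 * x ^ i := fun i => pow_add x 3 i
        simp_rw [hrw, ← Finset.mul_sum]
        have hgs := geom_sum_mul x (ℓ + 1 - 3)
        have hxn : 0 < x ^ (ℓ + 1 - 3 : ℕ) := pow_pos hx0 _
        have hx3 : 0 < x ^ 3 := pow_pos hx0 3
        nlinarith [hgs, hxn, hx3]
      have hSle : 0 ≤ S := Finset.sum_nonneg fun i _ => by positivity
      have h12 : (1 - x) * (1 - S) > 1 - x - x^3 := by nlinarith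
      have htailpos : (0:ℝ) < ∏ j ∈ Finset.Ioc 2 ℓ, (1 - x ^ j) := by
        apply Finset.prod_pos
        intro i hi
        have h1i : 1 ≤ i := by have := (mem_Ioc.mp hi).1; omega
        have := hpow i h1i; linarith
      calc (1 - x^2) * (1 - x - x^3) < (1 - x^2) * ((1 - x) * (1 - S)) := by nlinarith
        _ ≤ (1 - x^2) * ((1 - x) * ∏ j ∈ Finset.Ioc 2 ℓ, (1 - x ^ j)) := by
            apply mul_le_mul_of_nonneg_left _ hx2pos.le
            exact mul_le_mul_of_nonneg_left htail (by linarith)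
        _ = (1 - x ^ 1) * (1 - x ^ 2) * ∏ j ∈ Finset.Ioc 2 ℓ, (1 - x ^ j) := by ring
  have hQpos : (0:ℝ) < (1 - x^2) * (1 - x - x^3) := mul_pos hx2pos htp
  calc (∏ j ∈ Finset.Icc 1 ℓ, (1 - x ^ j))⁻¹
      < ((1 - x^2) * (1 - x - x^3))⁻¹ := by
        exact inv_strictAnti₀ hQpos hQ
    _ < 1 + 6 * x := by
        rw [inv_eq_one_div, div_lt_iff₀ hQpos]
        nlinarith [pow_pos hx0 4, pow_pos hx0 5, sq_nonneg x, sq_nonneg (1 - 2*x),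
          mul_pos hx0 hx0]

/-- For any real `p ≥ 2` and integer `ℓ ≥ 1`,
`∏_{j=1}^{ℓ} 1/(1 - p^(-j)) < 1 + 6/p`. -/
theorem prod_one_sub_inv_lt (p : ℝ) (hp : 2 ≤ p) (ℓ : ℕ) (hℓ : 1 ≤ ℓ) :
    ∏ j ∈ Finset.Icc 1 ℓ, (1 - (p ^ j)⁻¹)⁻¹ < 1 + 6 / p := by
  have hp0 : 0 < p := by linarith
  have hx0 : 0 < p⁻¹ := inv_pos.mpr hp0
  have hx2 : p⁻¹ ≤ 1/2 := by
    rw [inv_le_comm₀ hp0 (by norm_num)]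
    linarith
  have h := key p⁻¹ hx0 hx2 ℓ hℓ
  simp_rw [inv_pow] at h
  rw [div_eq_mul_inv]
  exact h
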